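/- arXiv:2308.09557 — 9 statements merged into one kernel-verified Lean document; each statement's English description precedes it below -/
import Mathlib

section
/- b_σ(Fin, J) ≥ 𝔟 for every ideal J on ω containing Fin; in fact b_σ(Fin) ≥ 𝔟: given a family ℰ ⊆ M_Fin of size less than 𝔟, there is (A_k) ∈ M_Fin dominating every member of ℰ eventually. Equivalently, any witness family for b_σ(Fin) yields a ≤*-unbounded family of functions of the same cardinality. -/
open Set

/-- `I` is an ideal on `α`: closed under subsets and finite unions,
contains all finite sets, does not contain the whole set. -/
def IsIdeal {α : Type*} (I : Set (Set α)) : Prop :=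
  (∀ A B : Set α, A ⊆ B → B ∈ I → A ∈ I) ∧
  (∀ A B : Set α, A ∈ I → B ∈ I → A ∪ B ∈ I) ∧
  (∀ A : Set α, A.Finite → A ∈ I) ∧
  Set.univ ∉ I

/-- `E` is a `⊆`-increasing sequence of members of `I` (the family `M_I`). -/
def MemM {α : Type*} (I : Set (Set α)) (E : ℕ → Set α) : Prop :=
  (∀ k, E k ∈ I) ∧ ∀ k, E k ⊆ E (k + 1)

/-- The cardinal `b_σ(I,J)`, with value `⊤` (i.e. `∞`) if no witness family exists. -/
noncomputable def bSigma {α : Type} (I J : Set (Set α)) : WithTop Cardinal :=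
  sInf {c | ∃ E : Set (ℕ → Set α), (∀ e ∈ E, MemM I e) ∧
    (∀ A : ℕ → Set α, MemM J A → ∃ e ∈ E, {k | ¬ e k ⊆ A k}.Infinite) ∧
    c = (Cardinal.mk E : WithTop Cardinal)}

/-- The cardinal `add_ω(I,J)`, with value `⊤` (i.e. `∞`) if no witness family exists. -/
noncomputable def addOmega {α : Type} (I J : Set (Set α)) : WithTop Cardinal :=
  sInf {c | ∃ A : Set (Set α), A ⊆ I ∧
    (∀ B : ℕ → Set α, (∀ n, B n ∈ J) → ∃ a ∈ A, ∀ n, ¬ a ⊆ B n) ∧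
    c = (Cardinal.mk A : WithTop Cardinal)}

/-- The cardinal `add*(I)`, with value `⊤` (i.e. `∞`) if no witness family exists. -/
noncomputable def addStar {α : Type} (I : Set (Set α)) : WithTop Cardinal :=
  sInf {c | ∃ A : Set (Set α), A ⊆ I ∧
    (∀ B ∈ I, ∃ a ∈ A, (a \ B).Infinite) ∧
    c = (Cardinal.mk A : WithTop Cardinal)}

/-- The cardinal `b_s(I,J,K)`, with value `⊤` (i.e. `∞`) if no witness family exists. -/
noncomputable def bS {α : Type} (I J K : Set (Set α)) : WithTop Cardinal :=
  sInf {c | ∃ E : Set (ℕ → Set α),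
    (∀ e ∈ E, (∀ n, e n ∈ K) ∧ ∀ n k, n ≠ k → e n ∩ e k = ∅) ∧
    (∀ A : ℕ → Set α, (∀ n, A n ∈ J) → (∀ n k, n ≠ k → A n ∩ A k = ∅) →
      (⋃ n, A n) = Set.univ →
      ∃ e ∈ E, (⋃ n, A (n + 1) ∩ ⋃ i ≤ n, e i) ∉ I) ∧
    c = (Cardinal.mk E : WithTop Cardinal)}

/-- The Fubini product `I ⊗ J` of two ideals on `ℕ`. -/
def fubini (I J : Set (Set ℕ)) : Set (Set (ℕ × ℕ)) :=
  {A | {n | {m | (n, m) ∈ A} ∉ J} ∈ I}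

/-- The ideal `Fin` of finite subsets of `ℕ`. -/
def finIdeal : Set (Set ℕ) := {A | A.Finite}

/-- The bounding number `𝔟`: the least cardinality of a `≤*`-unbounded family in `ω^ω`. -/
noncomputable def boundingNumber : Cardinal :=
  sInf {c | ∃ F : Set (ℕ → ℕ), Cardinal.mk F = c ∧
    ∀ g : ℕ → ℕ, ∃ f ∈ F, {n | g n < f n}.Infinite}

/-- `b_σ(Fin,J) ≥ 𝔟` for every ideal `J ⊇ Fin`: any family in `M_Fin` of size less
than `𝔟` is eventually dominated by a single member of `M_Fin`. -/
theorem stmt6 (J : Set (Set ℕ)) (hJ : IsIdeal J) (hFJ : finIdeal ⊆ J) :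
    (∀ E : Set (ℕ → Set ℕ), (∀ e ∈ E, MemM finIdeal e) →
      Cardinal.mk E < boundingNumber →
      ∃ A : ℕ → Set ℕ, MemM finIdeal A ∧ ∀ e ∈ E, {k | ¬ e k ⊆ A k}.Finite) ∧
    (boundingNumber : WithTop Cardinal) ≤ bSigma finIdeal J := by
  have key : ∀ E : Set (ℕ → Set ℕ), (∀ e ∈ E, MemM finIdeal e) →
      Cardinal.mk E < boundingNumber →
      ∃ A : ℕ → Set ℕ, MemM finIdeal A ∧ ∀ e ∈ E, {k | ¬ e k ⊆ A k}.Finite := by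
    intro E hE hlt
    set φ : (ℕ → Set ℕ) → (ℕ → ℕ) := fun e k => sInf {n | e k ⊆ Set.Iio n} with hφ
    have hcov : ∀ e ∈ E, ∀ k, e k ⊆ Set.Iio (φ e k) := by
      intro e he k
      have hfin : (e k).Finite := (hE e he).1 k
      have hne : {n | e k ⊆ Set.Iio n}.Nonempty := by
        obtain ⟨b, hb⟩ := hfin.bddAbove
        exact ⟨b + 1, fun x hx => Nat.lt_succ_of_le (hb hx)⟩
      exact Nat.sInf_mem hne
    set F : Set (ℕ → ℕ) := φ '' E with hF
    have hFlt : Cardinal.mk F < boundingNumber :=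
      lt_of_le_of_lt (Cardinal.mk_image_le) hlt
    have hbdd : ∃ g : ℕ → ℕ, ∀ f ∈ F, {n | g n < f n}.Finite := by
      by_contra h
      push_neg at h
      have hmem : Cardinal.mk F ∈ {c | ∃ F : Set (ℕ → ℕ), Cardinal.mk F = c ∧
          ∀ g : ℕ → ℕ, ∃ f ∈ F, {n | g n < f n}.Infinite} := by
        refine ⟨F, rfl, fun g => ?_⟩
        obtain ⟨f, hf, hinf⟩ := h g
        exact ⟨f, hf, hinf⟩
      have := csInf_le (OrderBot.bddBelow _) hmem
      exact absurd this (not_le_of_gt hFlt)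
    obtain ⟨g, hg⟩ := hbdd
    set G : ℕ → ℕ := fun k => (Finset.range (k + 1)).sup g with hG
    refine ⟨fun k => Set.Iio (G k), ⟨fun k => Set.finite_Iio _, fun k => ?_⟩, ?_⟩
    · exact Set.Iio_subset_Iio (Finset.sup_mono (Finset.range_subset_range.mpr (by omega)))
    · intro e he
      have hsub : {k | ¬ e k ⊆ Set.Iio (G k)} ⊆ {n | g n < φ e n} := by
        intro k hk
        by_contra hgk
        apply hk
        have h1 : φ e k ≤ g k := not_lt.mp hgk
        have h2 : g k ≤ G k := Finset.le_sup (Finset.mem_range.mpr (by omega))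
        exact (hcov e he k).trans (Set.Iio_subset_Iio (h1.trans h2))
      exact (hg (φ e) ⟨e, he, rfl⟩).subset hsub
  refine ⟨key, le_sInf ?_⟩
  rintro c ⟨E, hE1, hE2, rfl⟩
  rw [WithTop.coe_le_coe]
  by_contra h
  obtain ⟨A, hA, hdom⟩ := key E hE1 (not_le.mp h)
  obtain ⟨e, he, hinf⟩ := hE2 A ⟨fun k => hFJ (hA.1 k), hA.2⟩
  exact hinf (hdom e he)
end

section
/- Let I, J be ideals on ω with I ⊆ J. Then the cofinality of b_σ(I,J) is uncountable. -/
open Set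

lemma finUnion_mem {J : Set (Set ℕ)} (hJ : IsIdeal J) (s : Finset ℕ) (f : ℕ → Set ℕ)
    (h : ∀ n ∈ s, f n ∈ J) : (⋃ n ∈ s, f n) ∈ J := by
  classical
  induction s using Finset.induction_on with
  | empty => simpa using hJ.2.2.1 ∅ finite_empty
  | insert _ _ hx ih =>
      rw [Finset.set_biUnion_insert]
      exact hJ.2.1 _ _ (h _ (Finset.mem_insert_self _ _))
        (ih fun n hn => h n (Finset.mem_insert_of_mem hn))

lemma diagonal {J : Set (Set ℕ)} (hJ : IsIdeal J) (B : ℕ → ℕ → Set ℕ)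
    (hB : ∀ n, MemM J (B n)) :
    ∃ A : ℕ → Set ℕ, MemM J A ∧ ∀ n (e : ℕ → Set ℕ),
      {k | ¬ e k ⊆ B n k}.Finite → {k | ¬ e k ⊆ A k}.Finite := by
  refine ⟨fun k => ⋃ n ∈ Finset.range (k+1), B n k, ⟨?_, ?_⟩, ?_⟩
  · intro k; exact finUnion_mem hJ _ _ fun n _ => (hB n).1 k
  · intro k x hx
    simp only [mem_iUnion, Finset.mem_range] at hx ⊢
    obtain ⟨n, hn, hx⟩ := hx
    exact ⟨n, by omega, (hB n).2 k hx⟩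
  · intro n e he
    refine ((he.union (finite_Iio n))).subset ?_
    intro k hk
    simp only [mem_setOf_eq, mem_union, mem_Iio] at hk ⊢
    by_contra hc
    push_neg at hc
    obtain ⟨h1, h2⟩ := hc
    refine hk (h1.trans ?_)
    intro x hx
    simp only [mem_iUnion, Finset.mem_range]
    exact ⟨n, by omega, hx⟩

lemma countable_not_witness {I J : Set (Set ℕ)} (hI : IsIdeal I) (hJ : IsIdeal J) (hIJ : I ⊆ J)
    (E : Set (ℕ → Set ℕ)) (hE : ∀ e ∈ E, MemM I e) (hc : E.Countable) :
    ¬ (∀ A : ℕ → Set ℕ, MemM J A → ∃ e ∈ E, {k | ¬ e k ⊆ A k}.Infinite) := by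
  intro hw
  rcases E.eq_empty_or_nonempty with rfl | hne
  · obtain ⟨e, he, -⟩ := hw (fun _ => ∅)
      ⟨fun k => hJ.2.2.1 ∅ finite_empty, fun k => subset_rfl⟩
    exact he
  · haveI := hc.to_subtype
    haveI := hne.to_subtype
    obtain ⟨s, hs⟩ := exists_surjective_nat ↥E
    obtain ⟨A, hA, hdom⟩ := diagonal hJ (fun n => (s n : ℕ → Set ℕ))
      (fun n => ⟨fun k => hIJ ((hE _ (s n).2).1 k), (hE _ (s n).2).2⟩)
    obtain ⟨e, heE, hinf⟩ := hw A hA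
    obtain ⟨n, hn⟩ := hs ⟨e, heE⟩
    have hcoe : ((s n : ℕ → Set ℕ)) = e := by rw [hn]
    refine hinf (hdom n e ?_)
    rw [hcoe]
    convert finite_empty
    ext k; simp

/-- If `I ⊆ J`, then the cofinality of `b_σ(I,J)` is uncountable
(in particular `b_σ(I,J)` is a genuine cardinal, not `∞`). -/
theorem stmt7 (I J : Set (Set ℕ)) (hI : IsIdeal I) (hJ : IsIdeal J) (hIJ : I ⊆ J) :
    ∃ c : Cardinal, bSigma I J = (c : WithTop Cardinal) ∧ Cardinal.aleph0 < c.ord.cof := by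
  classical
  set W : Set (ℕ → Set ℕ) → Prop := fun E =>
    (∀ e ∈ E, MemM I e) ∧
    (∀ A : ℕ → Set ℕ, MemM J A → ∃ e ∈ E, {k | ¬ e k ⊆ A k}.Infinite) with hW
  set C : Set Cardinal := {c | ∃ E : Set (ℕ → Set ℕ), W E ∧ c = Cardinal.mk E} with hC
  -- C is nonempty: the family of all members of M_I is a witness
  have hCne : C.Nonempty := by
    refine ⟨Cardinal.mk {e : ℕ → Set ℕ | MemM I e}, {e | MemM I e}, ⟨fun e he => he, ?_⟩, rfl⟩
    intro A hA
    have hcompl : ∀ k, ((A k)ᶜ).Nonempty := by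
      intro k
      rw [nonempty_compl]
      intro h
      exact hJ.2.2.2 (h ▸ hA.1 k)
    choose x hx using hcompl
    refine ⟨fun k => x '' {i | i ≤ k}, ?_, ?_⟩
    · exact ⟨fun k => hI.2.2.1 _ ((finite_Iic k).image x),
        fun k => image_mono fun i (hi : i ≤ k) => hi.trans (Nat.le_succ k)⟩
    · have huniv : {k | ¬ (x '' {i | i ≤ k}) ⊆ A k} = univ := by
        ext k
        simp only [mem_setOf_eq, mem_univ, iff_true]
        exact fun hk => hx k (hk ⟨k, le_refl k, rfl⟩)
      rw [huniv]
      exact infinite_univ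
  set κ : Cardinal := sInf C with hκdef
  have hκC : κ ∈ C := csInf_mem hCne
  obtain ⟨E, hWE, hEcard⟩ := hκC
  -- bSigma I J = κ
  have hbs : bSigma I J = (κ : WithTop Cardinal) := by
    refine le_antisymm (csInf_le (OrderBot.bddBelow _) ⟨E, hWE.1, hWE.2, by rw [hEcard]⟩) ?_
    refine le_csInf ⟨(κ : WithTop Cardinal), E, hWE.1, hWE.2, by rw [hEcard]⟩ ?_
    rintro t ⟨F, h1, h2, rfl⟩
    have hmem : Cardinal.mk ↑F ∈ C := ⟨F, ⟨h1, h2⟩, rfl⟩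
    have hle : κ ≤ Cardinal.mk ↑F := csInf_le (OrderBot.bddBelow C) hmem
    exact_mod_cast hle
  -- κ is uncountable
  have hκinf : Cardinal.aleph0 < κ := by
    by_contra h
    push_neg at h
    have : E.Countable := by
      rw [← Cardinal.le_aleph0_iff_set_countable, ← hEcard]; exact h
    exact countable_not_witness hI hJ hIJ E hWE.1 this hWE.2
  refine ⟨κ, hbs, ?_⟩
  -- cofinality is uncountable
  by_contra hcof
  push_neg at hcof
  have hlim : Order.IsSuccLimit κ.ord := Cardinal.isSuccLimit_ord hκinf.le
  haveI hτne : Nonempty κ.ord.ToType :=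
    Ordinal.toType_nonempty_iff_ne_zero.mpr hlim.pos.ne'
  obtain ⟨S, hSub, hScard⟩ := Order.exists_cof_eq (α := κ.ord.ToType)
  rw [Ordinal.cof_toType] at hScard
  have hScount : S.Countable := by
    rw [← Cardinal.le_aleph0_iff_set_countable, hScard]; exact hcof
  have hSne : S.Nonempty := by
    obtain ⟨a⟩ := hτne
    obtain ⟨b, hb, -⟩ := hSub a
    exact ⟨b, hb⟩
  haveI := hScount.to_subtype
  haveI := hSne.to_subtype
  obtain ⟨s, hs⟩ := exists_surjective_nat ↥S
  have hmkE : Cardinal.mk ↥E = Cardinal.mk κ.ord.ToType := by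
    rw [Cardinal.mk_ord_toType, ← hEcard]
  obtain ⟨φ⟩ := Cardinal.eq.mp hmkE
  set En : ℕ → Set (ℕ → Set ℕ) := fun n =>
    {x | ∃ h : x ∈ E, φ ⟨x, h⟩ ≤ (s n : κ.ord.ToType)} with hEn
  have hEnE : ∀ n, En n ⊆ E := fun n x hx => hx.1
  have hEnsmall : ∀ n, Cardinal.mk (En n) < κ := by
    intro n
    have hinj : Function.Injective (fun x : ↥(En n) =>
        (⟨φ ⟨x.1, x.2.choose⟩, x.2.choose_spec⟩ : ↥(Iic (s n : κ.ord.ToType)))) := by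
      intro x y hxy
      simp only [Subtype.mk.injEq] at hxy
      have h3 := φ.injective (congrArg Subtype.val hxy)
      have h4 := congrArg Subtype.val h3
      exact Subtype.ext h4
    have h1 : Cardinal.mk (En n) ≤ Cardinal.mk (Iic (s n : κ.ord.ToType)) :=
      Cardinal.mk_le_of_injective hinj
    have h2 : Cardinal.mk (Iic (s n : κ.ord.ToType)) < κ := by
      have : Iic (s n : κ.ord.ToType) = Iio (s n : κ.ord.ToType) ∪ {(s n : κ.ord.ToType)} := by
        exact Iio_union_right.symm
      rw [this]
      calc Cardinal.mk ↥(Iio (s n : κ.ord.ToType) ∪ {(s n : κ.ord.ToType)})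
          ≤ Cardinal.mk (Iio (s n : κ.ord.ToType)) + Cardinal.mk ({(s n : κ.ord.ToType)} : Set _) :=
            Cardinal.mk_union_le _ _
        _ < κ := by
            apply Cardinal.add_lt_of_lt hκinf.le (Cardinal.mk_Iio_ord_toType _)
            rw [Cardinal.mk_singleton]
            exact lt_trans Cardinal.one_lt_aleph0 hκinf
    exact lt_of_le_of_lt h1 h2
  have hcover : ∀ x (h : x ∈ E), ∃ n, x ∈ En n := by
    intro x h
    obtain ⟨b, hbS, hb⟩ := hSub (φ ⟨x, h⟩)
    obtain ⟨n, hn⟩ := hs ⟨b, hbS⟩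
    exact ⟨n, h, by rw [hn]; exact hb⟩
  have hnotwit : ∀ n, ∃ A : ℕ → Set ℕ, MemM J A ∧
      ∀ e ∈ En n, {k | ¬ e k ⊆ A k}.Finite := by
    intro n
    by_contra hcon
    push_neg at hcon
    have hwit : W (En n) := by
      refine ⟨fun e he => hWE.1 e (hEnE n he), ?_⟩
      intro A hA
      obtain ⟨e, he, hinf⟩ := hcon A hA
      exact ⟨e, he, Set.not_infinite.not_right.mp (fun hf => hinf hf)⟩
    have : κ ≤ Cardinal.mk (En n) := csInf_le (OrderBot.bddBelow _) ⟨En n, hwit, rfl⟩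
    exact absurd this (not_le.mpr (hEnsmall n))
  choose B hB1 hB2 using hnotwit
  obtain ⟨A, hA, hdom⟩ := diagonal hJ B hB1
  obtain ⟨e, heE, hinf⟩ := hWE.2 A hA
  obtain ⟨n, hn⟩ := hcover e heE
  exact hinf (hdom n e (hB2 n e hn))
end

section
/- For every ideal I on ω: b_σ(I) = min{b_s(I), add_ω(I)}, i.e., b_σ(I,I) = min{b_s(I,I,I), add_ω(I,I)}. -/
open Set

namespace Stmt8Aux
variable {I : Set (Set ℕ)}

lemma biUnion_le_zero (e : ℕ → Set ℕ) : (⋃ i ≤ 0, e i) = e 0 := by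
  ext x; simp [Nat.le_zero]

lemma biUnion_le_succ' (e : ℕ → Set ℕ) (k : ℕ) :
    (⋃ i ≤ k + 1, e i) = (⋃ i ≤ k, e i) ∪ e (k + 1) := by
  ext x
  simp only [Set.mem_iUnion, Set.mem_union]
  constructor
  · rintro ⟨i, hi, hx⟩
    rcases Nat.le_add_one_iff.mp hi with h | rfl
    · exact Or.inl ⟨i, h, hx⟩
    · exact Or.inr hx
  · rintro (⟨i, hi, hx⟩ | hx)
    · exact ⟨i, hi.trans (Nat.le_succ k), hx⟩
    · exact ⟨k + 1, le_rfl, hx⟩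

lemma biUnion_le_mono (e : ℕ → Set ℕ) {k l : ℕ} (h : k ≤ l) :
    (⋃ i ≤ k, e i) ⊆ ⋃ i ≤ l, e i := by
  intro x hx
  simp only [Set.mem_iUnion] at hx ⊢
  obtain ⟨i, hi, hx⟩ := hx
  exact ⟨i, hi.trans h, hx⟩

lemma biUnion_le_mem (hI : IsIdeal I) {e : ℕ → Set ℕ} (he : ∀ n, e n ∈ I) (k : ℕ) :
    (⋃ i ≤ k, e i) ∈ I := by
  induction k with
  | zero => rw [biUnion_le_zero]; exact he 0
  | succ k ih => rw [biUnion_le_succ']; exact hI.2.1 _ _ ih (he (k + 1))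

lemma self_subset_biUnion_le (e : ℕ → Set ℕ) {i k : ℕ} (h : i ≤ k) :
    e i ⊆ ⋃ j ≤ k, e j := by
  intro x hx; simp only [Set.mem_iUnion]; exact ⟨i, h, hx⟩

lemma bSigma_le_bS (hI : IsIdeal I) : bSigma I I ≤ bS I I I := by
  apply le_sInf
  rintro c ⟨E, hE1, hE2, rfl⟩
  set T : (ℕ → Set ℕ) → (ℕ → Set ℕ) := fun e k => ⋃ i ≤ k, e i with hT
  refine le_trans (sInf_le ⟨T '' E, ?_, ?_, rfl⟩)
    (WithTop.coe_le_coe.2 Cardinal.mk_image_le)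
  · rintro _ ⟨e, he, rfl⟩
    exact ⟨fun k => biUnion_le_mem hI (hE1 e he).1 k,
      fun k => biUnion_le_mono e (Nat.le_succ k)⟩
  · intro A hA
    set A' : ℕ → Set ℕ := fun k => A k ∪ Set.Iic k with hA'
    have hA'I : ∀ k, A' k ∈ I := fun k =>
      hI.2.1 _ _ (hA.1 k) (hI.2.2.1 _ (Set.finite_Iic k))
    have hA'mono : Monotone A' := monotone_nat_of_le_succ (fun k =>
      Set.union_subset_union (hA.2 k) (Set.Iic_subset_Iic.2 (Nat.le_succ k)))
    have hA'self : ∀ x : ℕ, x ∈ A' x := fun x => Or.inr (Set.mem_Iic.2 le_rfl)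
    set P : ℕ → Set ℕ := fun n => A' n \ ⋃ m < n, A' m with hP
    have hPI : ∀ n, P n ∈ I := fun n => hI.1 _ _ Set.diff_subset (hA'I n)
    have hPd0 : ∀ n k, n < k → P n ∩ P k = ∅ := by
      intro n k hnk
      ext x
      simp only [Set.mem_inter_iff, Set.mem_empty_iff_false, iff_false, not_and]
      rintro hxn hxk
      exact hxk.2 (Set.mem_iUnion.2 ⟨n, Set.mem_iUnion.2 ⟨hnk, hxn.1⟩⟩)
    have hPd : ∀ n k, n ≠ k → P n ∩ P k = ∅ := by
      intro n k hnk
      rcases Nat.lt_or_ge n k with h | h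
      · exact hPd0 n k h
      · rw [Set.inter_comm]; exact hPd0 k n (h.lt_of_ne (Ne.symm hnk))
    have hPu : (⋃ n, P n) = Set.univ := by
      classical
      ext x
      simp only [Set.mem_iUnion, Set.mem_univ, iff_true]
      have hx : ∃ n, x ∈ A' n := ⟨x, hA'self x⟩
      refine ⟨Nat.find hx, Nat.find_spec hx, ?_⟩
      intro hmem
      simp only [Set.mem_iUnion] at hmem
      obtain ⟨m, hmlt, hxm⟩ := hmem
      exact Nat.find_min hx hmlt hxm
    obtain ⟨e, heE, hS⟩ := hE2 P hPI hPd hPu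
    refine ⟨T e, ⟨e, heE, rfl⟩, ?_⟩
    by_contra hfin
    rw [Set.not_infinite] at hfin
    obtain ⟨K, hK⟩ := hfin.bddAbove
    have hgood : ∀ n, K < n → T e n ⊆ A n := by
      intro n hn
      by_contra hcon
      exact absurd (hK hcon) (not_le.2 hn)
    refine hS (hI.1 _ (⋃ i ≤ K, e i) ?_ (biUnion_le_mem hI (hE1 e heE).1 K))
    refine Set.iUnion_subset ?_
    intro n x hx
    rcases le_or_gt n K with h | h
    · exact biUnion_le_mono e h hx.2
    · exfalso
      have h1 : x ∈ A' n := Or.inl (hgood n h hx.2)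
      exact hx.1.2 (Set.mem_iUnion.2 ⟨n, Set.mem_iUnion.2 ⟨Nat.lt_succ_self n, h1⟩⟩)

lemma bSigma_le_addOmega (hI : IsIdeal I) : bSigma I I ≤ addOmega I I := by
  apply le_sInf
  rintro c ⟨𝒜, hsub, hcov, rfl⟩
  refine le_trans (sInf_le ⟨(fun a => fun _ : ℕ => a) '' 𝒜, ?_, ?_, rfl⟩)
    (WithTop.coe_le_coe.2 Cardinal.mk_image_le)
  · rintro _ ⟨a, ha, rfl⟩
    exact ⟨fun _ => hsub ha, fun _ => subset_rfl⟩
  · intro A hA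
    obtain ⟨a, ha, hna⟩ := hcov A hA.1
    refine ⟨fun _ => a, ⟨a, ha, rfl⟩, ?_⟩
    have h : {k : ℕ | ¬ (fun _ : ℕ => a) k ⊆ A k} = Set.univ := by
      ext k; simp [hna k]
    rw [h]; exact Set.infinite_univ

lemma min_le_bSigma (hI : IsIdeal I) :
    min (bS I I I) (addOmega I I) ≤ bSigma I I := by
  apply le_sInf
  rintro c ⟨ℰ, hM, hcov, rfl⟩
  set D : (ℕ → Set ℕ) → (ℕ → Set ℕ) :=
    fun e n => Nat.casesOn n (e 0) (fun m => e (m + 1) \ e m) with hD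
  have hDsum : ∀ e : ℕ → Set ℕ, (∀ k, e k ⊆ e (k + 1)) →
      ∀ n, (⋃ i ≤ n, D e i) = e n := by
    intro e he n
    induction n with
    | zero => rw [biUnion_le_zero]; rfl
    | succ n ih =>
      rw [biUnion_le_succ', ih]
      exact Set.union_diff_cancel (he n)
  have hDmem : ∀ e, MemM I e →
      (∀ n, D e n ∈ I) ∧ (∀ n k, n ≠ k → D e n ∩ D e k = ∅) := by
    intro e he
    have hmono : Monotone e := monotone_nat_of_le_succ he.2
    constructor
    · intro n
      cases n with
      | zero => exact he.1 0
      | succ m => exact hI.1 _ _ Set.diff_subset (he.1 (m + 1))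
    · have key : ∀ n k, n < k → D e n ∩ D e k = ∅ := by
        intro n k hnk
        ext x
        simp only [Set.mem_inter_iff, Set.mem_empty_iff_false, iff_false, not_and]
        intro hxn hxk
        cases k with
        | zero => omega
        | succ m =>
          have hsubn : D e n ⊆ e n := by
            cases n with
            | zero => exact subset_rfl
            | succ l => exact Set.diff_subset
          exact hxk.2 (hmono (Nat.lt_succ_iff.mp hnk) (hsubn hxn))
      intro n k hnk
      rcases Nat.lt_or_ge n k with h | h
      · exact key n k h
      · rw [Set.inter_comm]; exact key k n (h.lt_of_ne (Ne.symm hnk))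
  by_cases hbs : ∀ A : ℕ → Set ℕ, (∀ n, A n ∈ I) → (∀ n k, n ≠ k → A n ∩ A k = ∅) →
      (⋃ n, A n) = Set.univ → ∃ d ∈ D '' ℰ, (⋃ n, A (n + 1) ∩ ⋃ i ≤ n, d i) ∉ I
  · refine le_trans (min_le_left _ _) (le_trans (sInf_le ⟨D '' ℰ, ?_, hbs, rfl⟩)
      (WithTop.coe_le_coe.2 Cardinal.mk_image_le))
    rintro _ ⟨e, he, rfl⟩
    exact hDmem e (hM e he)
  · push_neg at hbs
    obtain ⟨P, hPI, hPd, hPu, hPS⟩ := hbs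
    have hS : ∀ e ∈ ℰ, (⋃ n, P (n + 1) ∩ e n) ∈ I := by
      intro e he
      have h1 := hPS (D e) ⟨e, he, rfl⟩
      have h2 : (⋃ n, P (n + 1) ∩ ⋃ i ≤ n, D e i) = ⋃ n, P (n + 1) ∩ e n :=
        Set.iUnion_congr fun n => by rw [hDsum e (hM e he).2 n]
      rwa [h2] at h1
    refine le_trans (min_le_right _ _) (le_trans (sInf_le
      ⟨(fun e => ⋃ n, P (n + 1) ∩ e n) '' ℰ, ?_, ?_, rfl⟩)
      (WithTop.coe_le_coe.2 Cardinal.mk_image_le))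
    · rintro _ ⟨e, he, rfl⟩
      exact hS e he
    · intro B hB
      by_contra hcon
      push_neg at hcon
      set A : ℕ → Set ℕ := fun k => (⋃ i ≤ k, P i) ∪ ⋃ i ≤ k, B i with hAdef
      have hAI : MemM I A :=
        ⟨fun k => hI.2.1 _ _ (biUnion_le_mem hI hPI k) (biUnion_le_mem hI hB k),
         fun k => Set.union_subset_union (biUnion_le_mono P (Nat.le_succ k))
           (biUnion_le_mono B (Nat.le_succ k))⟩
      obtain ⟨e, he, hinf⟩ := hcov A hAI
      obtain ⟨n₀, hn₀⟩ := hcon _ ⟨e, he, rfl⟩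
      have hmono : Monotone e := monotone_nat_of_le_succ (hM e he).2
      have hgood : ∀ k, n₀ ≤ k → e k ⊆ A k := by
        intro k hk x hx
        have hxu : x ∈ ⋃ n, P n := by rw [hPu]; exact Set.mem_univ x
        obtain ⟨m, hm⟩ := Set.mem_iUnion.1 hxu
        rcases le_or_gt m k with h | h
        · exact Or.inl (self_subset_biUnion_le P h hm)
        · obtain ⟨m', rfl⟩ : ∃ m', m = m' + 1 := ⟨m - 1, by omega⟩
          refine Or.inr (self_subset_biUnion_le B hk (hn₀ ?_))
          exact Set.mem_iUnion.2 ⟨m', ⟨hm, hmono (by omega : k ≤ m') hx⟩⟩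
      have hsub : {k | ¬ e k ⊆ A k} ⊆ Set.Iio n₀ := by
        intro k hk
        by_contra hc
        exact hk (hgood k (Nat.le_of_not_lt (fun h => hc h)))
      exact hinf ((Set.finite_Iio n₀).subset hsub)

end Stmt8Aux

/-- For every ideal `I` on `ω`: `b_σ(I) = min{b_s(I), add_ω(I)}`. -/
theorem stmt8 (I : Set (Set ℕ)) (hI : IsIdeal I) :
    bSigma I I = min (bS I I I) (addOmega I I) :=
  le_antisymm (le_min (Stmt8Aux.bSigma_le_bS hI) (Stmt8Aux.bSigma_le_addOmega hI))
    (Stmt8Aux.min_le_bSigma hI)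
end

section
/- If I is a P-ideal on ω, then add_ω(I) = add*(I). -/
open Set

/-- If `I` is a P-ideal on `ω`, then `add_ω(I) = add*(I)`. -/
theorem stmt10 (I : Set (Set ℕ)) (hI : IsIdeal I)
    (hP : ∀ A : ℕ → Set ℕ, (∀ n, A n ∈ I) → ∃ B ∈ I, ∀ n, (A n \ B).Finite) :
    addOmega I I = addStar I := by
  unfold addOmega addStar
  congr 1
  ext c
  constructor <;> rintro ⟨A, hAI, hcond, rfl⟩
  · refine ⟨A, hAI, fun B hB => ?_, rfl⟩
    obtain ⟨a, ha, hall⟩ := hcond (fun n => B ∪ Set.Iic n)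
      (fun n => hI.2.1 _ _ hB (hI.2.2.1 _ (Set.finite_Iic n)))
    refine ⟨a, ha, fun hfin => ?_⟩
    obtain ⟨N, hN⟩ := hfin.bddAbove
    exact hall N (fun x hx => by
      by_cases hxB : x ∈ B
      · exact Or.inl hxB
      · exact Or.inr (hN ⟨hx, hxB⟩))
  · refine ⟨A, hAI, fun Bn hBn => ?_, rfl⟩
    obtain ⟨B, hBI, hfin⟩ := hP Bn hBn
    obtain ⟨a, ha, hinfB⟩ := hcond B hBI
    exact ⟨a, ha, fun n hsub =>
      hinfB ((hfin n).subset (fun x hx => ⟨hsub hx.1, hx.2⟩))⟩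
end

section
/- For any ideals I, J on ω: b_σ(I ⊗ J) ≤ b_σ(I), where I ⊗ J is the Fubini product ideal on ω × ω. -/
open Set

/-- `b_σ(I ⊗ J) ≤ b_σ(I)` for all ideals `I, J` on `ω`. -/
theorem stmt12 (I J : Set (Set ℕ)) (hI : IsIdeal I) (hJ : IsIdeal J) :
    bSigma (fubini I J) (fubini I J) ≤ bSigma I I := by
  apply le_sInf
  rintro c ⟨E, hE, hcov, rfl⟩
  set φ : (ℕ → Set ℕ) → (ℕ → Set (ℕ × ℕ)) :=
    fun e k => (e k) ×ˢ (Set.univ : Set ℕ) with hφ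
  have key : bSigma (fubini I J) (fubini I J) ≤ (Cardinal.mk (φ '' E) : WithTop Cardinal) := by
    apply sInf_le
    refine ⟨φ '' E, ?_, ?_, rfl⟩
    · rintro _ ⟨e, he, rfl⟩
      constructor
      · intro k
        have heq : {n | {m | (n, m) ∈ φ e k} ∉ J} = e k := by
          ext n
          simp only [hφ, Set.mem_prod, Set.mem_univ, and_true, Set.mem_setOf_eq]
          constructor
          · intro h
            by_contra hn
            apply h
            have : {m : ℕ | n ∈ e k} = ∅ := by
              ext m; simp [hn]
            rw [this]
            exact hJ.2.2.1 ∅ Set.finite_empty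
          · intro hn h
            apply hJ.2.2.2
            have : {m : ℕ | n ∈ e k} = Set.univ := by
              ext m; simp [hn]
            rwa [this] at h
        show {n | {m | (n, m) ∈ φ e k} ∉ J} ∈ I
        rw [heq]
        exact (hE e he).1 k
      · intro k
        exact Set.prod_mono ((hE e he).2 k) (subset_refl _)
    · intro A hA
      set B : ℕ → Set ℕ := fun k => {n | {m | (n, m) ∈ A k} ∉ J} with hB
      have hBmem : MemM I B := by
        constructor
        · intro k; exact hA.1 k
        · intro k n hn
          simp only [hB, Set.mem_setOf_eq] at hn ⊢
          intro h
          apply hn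
          exact hJ.1 _ _ (fun m hm => hA.2 k hm) h
      obtain ⟨e, he, hinf⟩ := hcov B hBmem
      refine ⟨φ e, Set.mem_image_of_mem φ he, ?_⟩
      apply hinf.mono
      intro k hk
      simp only [Set.mem_setOf_eq] at hk ⊢
      intro hsub
      apply hk
      intro n hn
      simp only [hB, Set.mem_setOf_eq]
      intro h
      apply hJ.2.2.2
      have : {m : ℕ | (n, m) ∈ A k} = Set.univ := by
        ext m
        simp only [Set.mem_setOf_eq, Set.mem_univ, iff_true]
        exact hsub (by simp [hφ, hn] : (n, m) ∈ φ e k)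
      rwa [this] at h
  refine key.trans ?_
  exact_mod_cast Cardinal.mk_image_le
end

section
/- For any ideals I, J on ω: b_σ(I ⊗ J) ≤ b_σ(J). -/
open Set

lemma sInf_le_sInf_aux (S T : Set (WithTop Cardinal))
    (h : ∀ c ∈ T, ∃ c' ∈ S, c' ≤ c) : sInf S ≤ sInf T := by
  rcases T.eq_empty_or_nonempty with rfl | hT
  · simp
  · refine le_csInf hT fun c hc => ?_
    obtain ⟨c', hc', hle⟩ := h c hc
    exact (csInf_le (OrderBot.bddBelow S) hc').trans hle

/-- `b_σ(I ⊗ J) ≤ b_σ(J)` for all ideals `I, J` on `ω`. -/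
theorem stmt13 (I J : Set (Set ℕ)) (hI : IsIdeal I) (hJ : IsIdeal J) :
    bSigma (fubini I J) (fubini I J) ≤ bSigma J J := by
  apply sInf_le_sInf_aux
  rintro c ⟨E, hE1, hE2, rfl⟩
  set Φ : (ℕ → Set ℕ) → (ℕ → Set (ℕ × ℕ)) := fun e k => Set.univ ×ˢ e k with hΦ
  refine ⟨Cardinal.mk (Φ '' E), ⟨Φ '' E, ?_, ?_, rfl⟩, ?_⟩
  · rintro e' ⟨e, he, rfl⟩
    constructor
    · intro k
      have : {n | {m | (n, m) ∈ Φ e k} ∉ J} = ∅ := by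
        ext n
        simp only [Set.mem_setOf_eq, Set.mem_empty_iff_false, iff_false, not_not]
        have : {m | (n, m) ∈ Φ e k} = e k := by
          ext m; simp [hΦ, Set.mem_prod]
        rw [this]; exact (hE1 e he).1 k
      show {n | {m | (n, m) ∈ Φ e k} ∉ J} ∈ I
      rw [this]
      exact hI.2.2.1 ∅ Set.finite_empty
    · intro k p hp
      obtain ⟨hp1, hp2⟩ := hp
      exact ⟨trivial, (hE1 e he).2 k hp2⟩
  · intro A hA
    -- sections
    set sec : ℕ → ℕ → Set ℕ := fun j n => {m | (n, m) ∈ A j} with hsec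
    have hbad : ∀ j, {n | sec j n ∉ J} ∈ I := fun j => hA.1 j
    have hpick : ∀ j, ∃ n, sec j n ∈ J := by
      intro j
      by_contra hcon
      push_neg at hcon
      have : {n | sec j n ∉ J} = Set.univ := by
        ext n; simp [hcon n]
      exact hI.2.2.2 (this ▸ hbad j)
    choose nn hnn using hpick
    -- increasing sequence of finite unions
    set B : ℕ → Set ℕ := fun k => Nat.rec (sec 0 (nn 0))
      (fun k Bk => Bk ∪ sec (k + 1) (nn (k + 1))) k with hB
    have hBJ : ∀ k, B k ∈ J := by
      intro k
      induction k with
      | zero => exact hnn 0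
      | succ k ih => exact hJ.2.1 _ _ ih (hnn (k + 1))
    have hBmono : ∀ k, B k ⊆ B (k + 1) := fun k => Set.subset_union_left
    have hsecB : ∀ k, sec k (nn k) ⊆ B k := by
      intro k
      cases k with
      | zero => exact subset_rfl
      | succ k => exact Set.subset_union_right
    obtain ⟨e, he, hinf⟩ := hE2 B ⟨hBJ, hBmono⟩
    refine ⟨Φ e, ⟨e, he, rfl⟩, hinf.mono ?_⟩
    intro k hk
    simp only [Set.mem_setOf_eq] at hk ⊢
    intro hsub
    apply hk
    intro m hm
    have : (nn k, m) ∈ A k := hsub ⟨trivial, hm⟩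
    exact hsecB k this
  · exact_mod_cast Cardinal.mk_image_le
end

section
/- For any ideals I, J on ω: b_σ(I ⊗ J) ≥ min{b_σ(I), b_σ(J)}. -/
open Set

section Aux

/-- Section of a subset of the plane. -/
def secAt (E : Set (ℕ × ℕ)) (n : ℕ) : Set ℕ := {m | (n, m) ∈ E}

open Classical in
/-- Truncate a set to `∅` if it is not in the ideal. -/
noncomputable def cutJ (J : Set (Set ℕ)) (A : Set ℕ) : Set ℕ := if A ∈ J then A else ∅

/-- The `I`-side trace of a sequence. -/
def DfunI (J : Set (Set ℕ)) (E : ℕ → Set (ℕ × ℕ)) (k : ℕ) : Set ℕ :=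
  {n | secAt (E k) n ∉ J}

/-- The `J`-side trace of a sequence. -/
noncomputable def HfunJ (J : Set (Set ℕ)) (E : ℕ → Set (ℕ × ℕ)) (k : ℕ) : Set ℕ :=
  ⋃ n ∈ Finset.range (k + 1), ⋃ j ∈ Finset.range (k + 1), cutJ J (secAt (E j) n)

lemma empty_mem_ideal {α : Type*} {I : Set (Set α)} (hI : IsIdeal I) : ∅ ∈ I :=
  hI.2.2.1 ∅ Set.finite_empty

lemma cutJ_mem {J : Set (Set ℕ)} (hJ : IsIdeal J) (A : Set ℕ) : cutJ J A ∈ J := by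
  unfold cutJ
  split
  · assumption
  · exact empty_mem_ideal hJ

lemma finset_biUnion_mem_ideal {α : Type*} {I : Set (Set α)} (hI : IsIdeal I)
    (s : Finset ℕ) (f : ℕ → Set α) (hf : ∀ i ∈ s, f i ∈ I) :
    (⋃ i ∈ s, f i) ∈ I := by
  classical
  induction s using Finset.induction with
  | empty => simpa using empty_mem_ideal hI
  | @insert a t ha ih =>
    rw [Finset.set_biUnion_insert]
    exact hI.2.1 _ _ (hf a (Finset.mem_insert_self a t))
      (ih fun i hi => hf i (Finset.mem_insert_of_mem hi))

lemma HfunJ_mem {J : Set (Set ℕ)} (hJ : IsIdeal J) (E : ℕ → Set (ℕ × ℕ)) (k : ℕ) :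
    HfunJ J E k ∈ J := by
  apply finset_biUnion_mem_ideal hJ
  intro n _
  apply finset_biUnion_mem_ideal hJ
  intro j _
  exact cutJ_mem hJ _

lemma HfunJ_mono {J : Set (Set ℕ)} (E : ℕ → Set (ℕ × ℕ)) {k k' : ℕ} (h : k ≤ k') :
    HfunJ J E k ⊆ HfunJ J E k' := by
  intro x hx
  simp only [HfunJ, Set.mem_iUnion, Finset.mem_range] at hx ⊢
  obtain ⟨n, hn, j, hj, hx⟩ := hx
  exact ⟨n, by omega, j, by omega, hx⟩

lemma sec_subset_HfunJ {J : Set (Set ℕ)} (E : ℕ → Set (ℕ × ℕ)) {n k k' : ℕ}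
    (hmem : secAt (E k) n ∈ J) (hn : n ≤ k') (hk : k ≤ k') :
    secAt (E k) n ⊆ HfunJ J E k' := by
  intro x hx
  simp only [HfunJ, Set.mem_iUnion, Finset.mem_range]
  refine ⟨n, by omega, k, by omega, ?_⟩
  rwa [cutJ, if_pos hmem]

lemma DfunI_memM {I J : Set (Set ℕ)} (hJ : IsIdeal J)
    {E : ℕ → Set (ℕ × ℕ)} (hE : MemM (fubini I J) E) : MemM I (DfunI J E) := by
  constructor
  · intro k
    exact hE.1 k
  · intro k n hn
    simp only [DfunI, Set.mem_setOf_eq] at hn ⊢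
    intro hcon
    exact hn (hJ.1 _ _ (fun m hm => hE.2 k hm) hcon)

lemma HfunJ_memM {I J : Set (Set ℕ)} (hJ : IsIdeal J)
    {E : ℕ → Set (ℕ × ℕ)} (_hE : MemM (fubini I J) E) : MemM J (HfunJ J E) :=
  ⟨HfunJ_mem hJ E, fun k => HfunJ_mono E (Nat.le_succ k)⟩

lemma memM_mono {α : Type*} {I : Set (Set α)} {B : ℕ → Set α} (hB : MemM I B) :
    Monotone B :=
  monotone_nat_of_le_succ hB.2

lemma finite_bound {S : Set ℕ} (h : S.Finite) : ∃ N, ∀ k, N ≤ k → k ∉ S := by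
  obtain ⟨N, hN⟩ := h.bddAbove
  exact ⟨N + 1, fun k hk hmem => by have := hN hmem; omega⟩

end Aux

/-- `b_σ(I ⊗ J) ≥ min{b_σ(I), b_σ(J)}` for all ideals `I, J` on `ω`. -/
theorem stmt14 (I J : Set (Set ℕ)) (hI : IsIdeal I) (hJ : IsIdeal J) :
    min (bSigma I I) (bSigma J J) ≤ bSigma (fubini I J) (fubini I J) := by
  apply le_sInf
  rintro c ⟨E, hEmem, hEwit, rfl⟩
  by_contra hlt
  push_neg at hlt
  have hltI : (Cardinal.mk E : WithTop Cardinal) < bSigma I I := lt_of_lt_of_le hlt (min_le_left _ _)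
  have hltJ : (Cardinal.mk E : WithTop Cardinal) < bSigma J J := lt_of_lt_of_le hlt (min_le_right _ _)
  -- Get C from the I-side
  have hCex : ∃ C : ℕ → Set ℕ, MemM I C ∧ ∀ e ∈ E, ({k | ¬ DfunI J e k ⊆ C k}).Finite := by
    by_contra hcon
    push_neg at hcon
    have hmemset : (Cardinal.mk ((fun e : ℕ → Set (ℕ × ℕ) => DfunI J e) '' E) : WithTop Cardinal) ∈
        {c | ∃ F : Set (ℕ → Set ℕ), (∀ e ∈ F, MemM I e) ∧
          (∀ A : ℕ → Set ℕ, MemM I A → ∃ e ∈ F, {k | ¬ e k ⊆ A k}.Infinite) ∧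
          c = (Cardinal.mk F : WithTop Cardinal)} := by
      refine ⟨_, ?_, ?_, rfl⟩
      · rintro d ⟨e, he, rfl⟩
        exact DfunI_memM hJ (hEmem e he)
      · intro A hA
        obtain ⟨e, he, hinf⟩ := hcon A hA
        refine ⟨DfunI J e, ⟨e, he, rfl⟩, ?_⟩
        exact hinf
    have h1 : bSigma I I ≤ (Cardinal.mk ((fun e : ℕ → Set (ℕ × ℕ) => DfunI J e) '' E) : WithTop Cardinal) :=
      sInf_le hmemset
    have h2 : (Cardinal.mk ((fun e : ℕ → Set (ℕ × ℕ) => DfunI J e) '' E) : WithTop Cardinal) ≤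
        (Cardinal.mk E : WithTop Cardinal) := by
      exact_mod_cast Cardinal.mk_image_le
    exact absurd (h1.trans h2) (not_le_of_gt hltI)
  obtain ⟨C, hC, hCdom⟩ := hCex
  -- Get B from the J-side
  have hBex : ∃ B : ℕ → Set ℕ, MemM J B ∧ ∀ e ∈ E, ({k | ¬ HfunJ J e k ⊆ B k}).Finite := by
    by_contra hcon
    push_neg at hcon
    have hmemset : (Cardinal.mk ((fun e : ℕ → Set (ℕ × ℕ) => HfunJ J e) '' E) : WithTop Cardinal) ∈
        {c | ∃ F : Set (ℕ → Set ℕ), (∀ e ∈ F, MemM J e) ∧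
          (∀ A : ℕ → Set ℕ, MemM J A → ∃ e ∈ F, {k | ¬ e k ⊆ A k}.Infinite) ∧
          c = (Cardinal.mk F : WithTop Cardinal)} := by
      refine ⟨_, ?_, ?_, rfl⟩
      · rintro d ⟨e, he, rfl⟩
        exact HfunJ_memM hJ (hEmem e he)
      · intro A hA
        obtain ⟨e, he, hinf⟩ := hcon A hA
        refine ⟨HfunJ J e, ⟨e, he, rfl⟩, ?_⟩
        exact hinf
    have h1 : bSigma J J ≤ _ := sInf_le hmemset
    have h2 : (Cardinal.mk ((fun e : ℕ → Set (ℕ × ℕ) => HfunJ J e) '' E) : WithTop Cardinal) ≤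
        (Cardinal.mk E : WithTop Cardinal) := by
      exact_mod_cast Cardinal.mk_image_le
    exact absurd (h1.trans h2) (not_le_of_gt hltJ)
  obtain ⟨B, hB, hBdom⟩ := hBex
  -- Build the dominating sequence A in M_{I ⊗ J}
  set A : ℕ → Set (ℕ × ℕ) := fun k => {p : ℕ × ℕ | p.1 ∈ C k ∨ p.2 ∈ B (max p.1 k)} with hAdef
  have hAmem : MemM (fubini I J) A := by
    constructor
    · intro k
      show {n | {m | (n, m) ∈ A k} ∉ J} ∈ I
      apply hI.1 _ (C k) _ (hC.1 k)
      intro n hn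
      simp only [Set.mem_setOf_eq] at hn
      by_contra hnC
      apply hn
      have : {m | (n, m) ∈ A k} = B (max n k) := by
        ext m
        simp only [hAdef, Set.mem_setOf_eq]
        constructor
        · rintro (h | h)
          · exact absurd h hnC
          · exact h
        · exact fun h => Or.inr h
      rw [this]
      exact hB.1 _
    · intro k p hp
      simp only [hAdef, Set.mem_setOf_eq] at hp ⊢
      rcases hp with h | h
      · exact Or.inl (hC.2 k h)
      · exact Or.inr (memM_mono hB (by omega) h)
  -- E must defeat A, derive a contradiction
  obtain ⟨e, he, hinf⟩ := hEwit A hAmem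
  obtain ⟨k0, hk0⟩ := finite_bound (hCdom e he)
  obtain ⟨k1, hk1⟩ := finite_bound (hBdom e he)
  apply hinf
  apply Set.Finite.subset (Set.finite_Iio (max k0 k1))
  intro k hk
  simp only [Set.mem_setOf_eq] at hk
  rw [Set.mem_Iio]
  by_contra hklt
  push_neg at hklt
  apply hk
  rintro ⟨n, m⟩ hnm
  have hkk0 : k0 ≤ k := le_trans (le_max_left _ _) hklt
  have hkk1 : k1 ≤ k := le_trans (le_max_right _ _) hklt
  have hDk : DfunI J e k ⊆ C k := by
    by_contra hcon
    exact hk0 k hkk0 hcon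
  by_cases hnC : n ∈ C k
  · exact Or.inl hnC
  · right
    have hnD : n ∉ DfunI J e k := fun h => hnC (hDk h)
    simp only [DfunI, Set.mem_setOf_eq, not_not] at hnD
    have hsub : secAt (e k) n ⊆ HfunJ J e (max n k) :=
      sec_subset_HfunJ e hnD (le_max_left _ _) (le_max_right _ _)
    have hHB : HfunJ J e (max n k) ⊆ B (max n k) := by
      by_contra hcon
      exact hk1 (max n k) (le_trans hkk1 (le_max_right _ _)) hcon
    exact hHB (hsub hnm)
end

section
/- add_ω(Fin ⊗ Fin) = 𝔟, where Fin ⊗ Fin = {A ⊆ ω×ω : all but finitely many vertical sections of A are finite}. -/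
open Set

lemma phi_mem (f : ℕ → ℕ) :
    {p : ℕ × ℕ | p.2 ≤ f p.1} ∈ fubini finIdeal finIdeal := by
  have h : ∀ n : ℕ, {m | m ≤ f n}.Finite := fun n => Set.finite_Iic (f n)
  simp [fubini, finIdeal, h]

/-- An unbounded family gives an `addOmega` witness family. -/
lemma unbounded_to_witness (F : Set (ℕ → ℕ))
    (hF : ∀ g : ℕ → ℕ, ∃ f ∈ F, {n | g n < f n}.Infinite) :
    ∃ A : Set (Set (ℕ × ℕ)), A ⊆ fubini finIdeal finIdeal ∧
      (∀ B : ℕ → Set (ℕ × ℕ), (∀ n, B n ∈ fubini finIdeal finIdeal) →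
        ∃ a ∈ A, ∀ n, ¬ a ⊆ B n) ∧
      Cardinal.mk A ≤ Cardinal.mk F := by
  classical
  refine ⟨(fun f => {p : ℕ × ℕ | p.2 ≤ f p.1}) '' F, ?_, ?_, Cardinal.mk_image_le⟩
  · rintro a ⟨f, _, rfl⟩; exact phi_mem f
  · intro B hB
    set h : ℕ → ℕ → ℕ := fun k n => sInf {m | (n, m) ∉ B k} with hh
    set g : ℕ → ℕ := fun n => Finset.sup (Finset.range (n + 1)) (fun k => h k n) with hg
    obtain ⟨f, hfF, hfin⟩ := hF g
    refine ⟨_, ⟨f, hfF, rfl⟩, fun k hsub => ?_⟩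
    have hBk : {n | ¬ {m | (n, m) ∈ B k}.Finite}.Finite := hB k
    obtain ⟨n, hn, hnk⟩ := ((hfin.diff hBk).exists_gt k)
    have hng : g n < f n := hn.1
    have hsec : {m | (n, m) ∈ B k}.Finite := not_not.mp hn.2
    have hcne : {m | (n, m) ∉ B k}.Nonempty := by
      have := hsec.infinite_compl
      have : ({m | (n, m) ∈ B k}ᶜ : Set ℕ).Nonempty := this.nonempty
      obtain ⟨m, hm⟩ := this
      exact ⟨m, hm⟩
    have hmem : h k n ∈ {m | (n, m) ∉ B k} := Nat.sInf_mem hcne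
    have hle : h k n ≤ g n := by
      rw [hg]
      exact Finset.le_sup (f := fun k => h k n) (Finset.mem_range.mpr (Nat.lt_succ_of_lt hnk))
    exact hmem (hsub (show ((n, h k n) : ℕ × ℕ) ∈ _ from le_of_lt (lt_of_le_of_lt hle hng)))

/-- An `addOmega` witness family gives an unbounded family. -/
lemma witness_to_unbounded (A : Set (Set (ℕ × ℕ)))
    (hAI : A ⊆ fubini finIdeal finIdeal)
    (hA : ∀ B : ℕ → Set (ℕ × ℕ), (∀ n, B n ∈ fubini finIdeal finIdeal) →
      ∃ a ∈ A, ∀ n, ¬ a ⊆ B n) :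
    ∃ F : Set (ℕ → ℕ), (∀ g : ℕ → ℕ, ∃ f ∈ F, {n | g n < f n}.Infinite) ∧
      Cardinal.mk F ≤ Cardinal.mk A := by
  classical
  set Ψ : Set (ℕ × ℕ) → ℕ → ℕ :=
    fun a n => sInf {b | ∀ m, (n, m) ∈ a → m < b} with hΨ
  refine ⟨Ψ '' A, ?_, Cardinal.mk_image_le⟩
  intro g
  set B : ℕ → Set (ℕ × ℕ) := fun k => {p | p.1 ≤ k ∨ p.2 ≤ g p.1} with hB
  have hBmem : ∀ k, B k ∈ fubini finIdeal finIdeal := by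
    intro k
    have : {n | ¬ {m | n ≤ k ∨ m ≤ g n}.Finite} ⊆ Iic k := by
      intro n hn
      simp only [mem_setOf_eq] at hn
      by_contra hnk
      have hnk' : ¬ n ≤ k := fun h => hnk h
      apply hn
      have : {m | n ≤ k ∨ m ≤ g n} = {m | m ≤ g n} := by
        ext m; simp [hnk']
      rw [this]; exact Set.finite_Iic (g n)
    exact Set.Finite.subset (Set.finite_Iic k) this
  obtain ⟨a, haA, ha⟩ := hA B hBmem
  refine ⟨Ψ a, ⟨a, haA, rfl⟩, ?_⟩
  have hT : {n | ∃ m, (n, m) ∈ a ∧ g n < m}.Infinite := by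
    apply Set.infinite_of_forall_exists_gt
    intro k
    have := ha k
    rw [Set.not_subset] at this
    obtain ⟨p, hpa, hpB⟩ := this
    simp only [hB, mem_setOf_eq, not_or, not_le] at hpB
    exact ⟨p.1, ⟨p.2, hpa, hpB.2⟩, hpB.1⟩
  have hC : {n | ¬ {m | (n, m) ∈ a}.Finite}.Finite := hAI haA
  refine Set.Infinite.mono ?_ (hT.diff hC)
  rintro n ⟨⟨m, hma, hgm⟩, hnc⟩
  have hsec : {m | (n, m) ∈ a}.Finite := not_not.mp hnc
  have hne : {b | ∀ m, (n, m) ∈ a → m < b}.Nonempty := by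
    obtain ⟨b, hb⟩ := hsec.bddAbove
    exact ⟨b + 1, fun m hm => Nat.lt_succ_of_le (hb hm)⟩
  have hmem := Nat.sInf_mem hne
  exact lt_trans hgm (hmem m hma)

/-- `add_ω(Fin ⊗ Fin) = 𝔟`. -/
theorem stmt15 :
    addOmega (fubini finIdeal finIdeal) (fubini finIdeal finIdeal)
      = (boundingNumber : WithTop Cardinal) := by
  have hSne : {c | ∃ F : Set (ℕ → ℕ), Cardinal.mk F = c ∧
      ∀ g : ℕ → ℕ, ∃ f ∈ F, {n | g n < f n}.Infinite}.Nonempty := by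
    refine ⟨_, (univ : Set (ℕ → ℕ)), rfl, fun g => ⟨fun n => g n + 1, mem_univ _, ?_⟩⟩
    have : {n | g n < g n + 1} = univ := by ext n; simp
    rw [this]; exact Set.infinite_univ
  apply le_antisymm
  · obtain ⟨F, hFc, hFub⟩ := csInf_mem hSne
    obtain ⟨A, hAI, hAw, hAc⟩ := unbounded_to_witness F hFub
    calc addOmega (fubini finIdeal finIdeal) (fubini finIdeal finIdeal)
        ≤ (Cardinal.mk A : WithTop Cardinal) := sInf_le ⟨A, hAI, hAw, rfl⟩
      _ ≤ (boundingNumber : WithTop Cardinal) := by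
          rw [show (boundingNumber : Cardinal) = Cardinal.mk F from hFc.symm]
          exact_mod_cast hAc
  · apply le_sInf
    rintro c ⟨A, hAI, hAw, rfl⟩
    obtain ⟨F, hFub, hFc⟩ := witness_to_unbounded A hAI hAw
    have hb : boundingNumber ≤ Cardinal.mk F :=
      csInf_le (OrderBot.bddBelow _) ⟨F, rfl, hFub⟩
    exact_mod_cast hb.trans hFc
end

section
/- Let I be an ideal on ω, X a topological space with X = ⋃_{α<κ} X_α, and (f_n) a sequence of continuous real-valued functions on X. If κ < b_s(I) (the least cardinality of a non-(I,I,I)-QN witness) and for each α < κ the restricted sequence (f_n ↾ X_α) converges I-quasi-normally to 0, then (f_n) converges I-quasi-normally to 0 on X. -/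
open Set

lemma ideal_biUnion {I : Set (Set ℕ)} (hI : IsIdeal I) (A : ℕ → Set ℕ)
    (hA : ∀ i, A i ∈ I) (m : ℕ) : (⋃ i, ⋃ _ : i ≤ m, A i) ∈ I := by
  induction m with
  | zero =>
    refine hI.1 _ (A 0) ?_ (hA 0)
    intro n hn
    simp only [Set.mem_iUnion] at hn
    obtain ⟨i, hi, hni⟩ := hn
    simpa [Nat.le_zero.mp hi] using hni
  | succ m ih =>
    refine hI.1 _ ((⋃ i, ⋃ _ : i ≤ m, A i) ∪ A (m + 1)) ?_ (hI.2.1 _ _ ih (hA (m+1)))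
    intro n hn
    simp only [Set.mem_iUnion, Set.mem_union] at hn ⊢
    obtain ⟨i, hi, hni⟩ := hn
    rcases Nat.lt_or_ge i (m+1) with h | h
    · exact Or.inl ⟨i, Nat.lt_succ_iff.mp h, hni⟩
    · exact Or.inr (Nat.le_antisymm hi h ▸ hni)

/-- If `X = ⋃_{α<κ} X_α` with `κ < b_s(I)` and each `(f_n ↾ X_α)` converges
`I`-quasi-normally to `0`, then `(f_n)` converges `I`-quasi-normally to `0` on `X`. -/
theorem stmt19 (I : Set (Set ℕ)) (hI : IsIdeal I)
    (X : Type) [TopologicalSpace X] (ι : Type) (Xa : ι → Set X)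
    (hcov : (⋃ a, Xa a) = Set.univ)
    (hk : (Cardinal.mk ι : WithTop Cardinal) < bS I I I)
    (f : ℕ → X → ℝ) (hf : ∀ n, Continuous (f n))
    (hqn : ∀ a : ι, ∃ e : ℕ → ℝ, (∀ n, 0 < e n) ∧
      (∀ ε : ℝ, 0 < ε → {n | ε ≤ e n} ∈ I) ∧
      ∀ x ∈ Xa a, {n | e n ≤ |f n x|} ∈ I) :
    ∃ e : ℕ → ℝ, (∀ n, 0 < e n) ∧ (∀ ε : ℝ, 0 < ε → {n | ε ≤ e n} ∈ I) ∧
      ∀ x : X, {n | e n ≤ |f n x|} ∈ I := by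

  classical
  choose eps hpos hcv hq using hqn
  -- the increasing I-sets
  set E : ι → ℕ → Set ℕ := fun a k => {n | 1 / ((k : ℝ) + 1) ≤ eps a n} with hEdef
  have hEI : ∀ a k, E a k ∈ I := fun a k => hcv a _ (by positivity)
  have hEmono : ∀ a, ∀ j k : ℕ, j ≤ k → E a j ⊆ E a k := by
    intro a j k hjk n hn
    simp only [hEdef, Set.mem_setOf_eq] at hn ⊢
    refine le_trans ?_ hn
    apply one_div_le_one_div_of_le (by positivity)
    exact_mod_cast Nat.succ_le_succ hjk
  -- disjointified version
  set es : ι → ℕ → Set ℕ := fun a k => E a k \ ⋃ j, ⋃ _ : j < k, E a j with hesdef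
  have hesI : ∀ a k, es a k ∈ I := fun a k => hI.1 _ _ Set.diff_subset (hEI a k)
  have hdisj' : ∀ a, ∀ j k : ℕ, j < k → es a j ∩ es a k = ∅ := by
    intro a j k hjk
    rw [Set.eq_empty_iff_forall_notMem]
    rintro n ⟨hj, hk⟩
    exact hk.2 (Set.mem_iUnion.mpr ⟨j, Set.mem_iUnion.mpr ⟨hjk, hj.1⟩⟩)
  have hdisj : ∀ a, ∀ j k : ℕ, j ≠ k → es a j ∩ es a k = ∅ := by
    intro a j k hjk
    rcases Nat.lt_or_ge j k with h | h
    · exact hdisj' a j k h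
    · rw [Set.inter_comm]
      exact hdisj' a k j (lt_of_le_of_ne h (Ne.symm hjk))
  have hEsub : ∀ a m, E a m ⊆ ⋃ i, ⋃ _ : i ≤ m, es a i := by
    intro a m n hn
    have hexi : ∃ i, n ∈ E a i := ⟨m, hn⟩
    set k := Nat.find hexi with hkdef
    have hk1 : n ∈ E a k := Nat.find_spec hexi
    have hkm : k ≤ m := Nat.find_min' hexi hn
    refine Set.mem_iUnion.mpr ⟨k, Set.mem_iUnion.mpr ⟨hkm, hk1, ?_⟩⟩
    intro hmem
    simp only [Set.mem_iUnion] at hmem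
    obtain ⟨j, hjk, hnj⟩ := hmem
    exact Nat.find_min hexi hjk hnj
  -- apply b_s
  set ℰ : Set (ℕ → Set ℕ) := Set.range (fun a => es a) with hℰdef
  have hcard : (Cardinal.mk ℰ : WithTop Cardinal) < bS I I I :=
    lt_of_le_of_lt (WithTop.coe_le_coe.mpr Cardinal.mk_range_le) hk
  have H2 : ¬ (∀ A : ℕ → Set ℕ, (∀ n, A n ∈ I) → (∀ n k, n ≠ k → A n ∩ A k = ∅) →
      (⋃ n, A n) = Set.univ →
      ∃ e ∈ ℰ, (⋃ n, A (n + 1) ∩ ⋃ i ≤ n, e i) ∉ I) := by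
    intro H
    have hle : bS I I I ≤ (Cardinal.mk ℰ : WithTop Cardinal) := by
      apply sInf_le
      refine ⟨ℰ, ?_, H, rfl⟩
      rintro e ⟨a, rfl⟩
      exact ⟨fun n => hesI a n, hdisj a⟩
    exact absurd hle (not_le.mpr hcard)
  push_neg at H2
  obtain ⟨A, hAI, hAd, hAu, hgood⟩ := H2
  have hB : ∀ a, (⋃ n, A (n + 1) ∩ ⋃ i, ⋃ _ : i ≤ n, es a i) ∈ I :=
    fun a => hgood _ ⟨a, rfl⟩
  -- pick the index of the partition cell
  have hex : ∀ n : ℕ, ∃ k, n ∈ A k := by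
    intro n
    have : n ∈ ⋃ k, A k := hAu ▸ Set.mem_univ n
    exact Set.mem_iUnion.mp this
  choose K hK using hex
  refine ⟨fun n => 1 / ((max (K n) 1 : ℕ) : ℝ), ?_, ?_, ?_⟩
  · intro n
    have : (0 : ℝ) < ((max (K n) 1 : ℕ) : ℝ) := by
      exact_mod_cast Nat.lt_of_lt_of_le Nat.zero_lt_one (le_max_right _ _)
    positivity
  · intro ε hε
    refine hI.1 _ (⋃ i, ⋃ _ : i ≤ ⌈1/ε⌉₊, A i) ?_ (ideal_biUnion hI A hAI _)
    intro n hn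
    simp only [Set.mem_setOf_eq] at hn
    have hM : (0 : ℝ) < ((max (K n) 1 : ℕ) : ℝ) := by
      exact_mod_cast Nat.lt_of_lt_of_le Nat.zero_lt_one (le_max_right _ _)
    have h1 : ((max (K n) 1 : ℕ) : ℝ) ≤ 1 / ε := by
      rw [le_div_iff₀ hε]
      calc ((max (K n) 1 : ℕ) : ℝ) * ε ≤ ((max (K n) 1 : ℕ) : ℝ) * (1 / ((max (K n) 1 : ℕ) : ℝ)) :=
            mul_le_mul_of_nonneg_left hn (le_of_lt hM)
        _ = 1 := by field_simp
    have h2 : ((max (K n) 1 : ℕ) : ℝ) ≤ (⌈1/ε⌉₊ : ℝ) := le_trans h1 (Nat.le_ceil _)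
    have h3 : K n ≤ ⌈1/ε⌉₊ := le_trans (le_max_left _ _) (by exact_mod_cast h2)
    exact Set.mem_iUnion.mpr ⟨K n, Set.mem_iUnion.mpr ⟨h3, hK n⟩⟩
  · intro x
    have hx : x ∈ ⋃ a, Xa a := hcov ▸ Set.mem_univ x
    obtain ⟨a, ha⟩ := Set.mem_iUnion.mp hx
    have hS1 : {n | eps a n ≤ |f n x|} ∈ I := hq a x ha
    refine hI.1 _ ({n | eps a n ≤ |f n x|} ∪ (E a 0 ∪
        ⋃ n, A (n + 1) ∩ ⋃ i, ⋃ _ : i ≤ n, es a i)) ?_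
      (hI.2.1 _ _ hS1 (hI.2.1 _ _ (hEI a 0) (hB a)))
    intro n hn
    simp only [Set.mem_setOf_eq] at hn
    by_cases hcase : eps a n ≤ |f n x|
    · exact Or.inl hcase
    · push_neg at hcase
      right
      have hdelta : 1 / ((max (K n) 1 : ℕ) : ℝ) < eps a n := lt_of_le_of_lt hn hcase
      rcases Nat.eq_zero_or_pos (K n) with h0 | hpos'
      · left
        simp only [hEdef, Set.mem_setOf_eq]
        have : ((max (K n) 1 : ℕ) : ℝ) = 1 := by rw [h0]; norm_num
        rw [this] at hdelta
        norm_num at hdelta ⊢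
        linarith
      · right
        have hmax : max (K n) 1 = K n := max_eq_left hpos'
        obtain ⟨m, hm⟩ : ∃ m, K n = m + 1 := ⟨K n - 1, (Nat.succ_pred_eq_of_pos hpos').symm⟩
        have hnE : n ∈ E a m := by
          simp only [hEdef, Set.mem_setOf_eq]
          have : ((max (K n) 1 : ℕ) : ℝ) = (m : ℝ) + 1 := by
            rw [hmax, hm]; push_cast; ring
          rw [this] at hdelta
          exact le_of_lt hdelta
        refine Set.mem_iUnion.mpr ⟨m, ?_, hEsub a m hnE⟩
        rw [← hm]
        exact hK n
end
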